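/- For all real γ, κ and every integer k ≥ 0, the generalized Bernoulli functions satisfy 𝒞_k(⟨−γ⟩, −κ) = (−1)^k·𝒞_k(⟨γ⟩, κ) − δ_{k1}·δ(γ), where δ_{k1} = 1 if k = 1 and 0 otherwise, and δ(γ) = 1 if γ ∈ ℤ and 0 otherwise. -/

import Mathlib

noncomputable section

open Complex MeasureTheory
open scoped Real Classical

/-- `e(s) = exp(2 π i s)`. -/
def ee (s : ℂ) : ℂ := Complex.exp (2 * (Real.pi : ℂ) * Complex.I * s)

/-- `δ(x) = 1` if `x ∈ ℤ`, `0` otherwise. -/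
def dInt (x : ℝ) : ℂ := if ∃ n : ℤ, (n : ℝ) = x then 1 else 0

/-- The Lerch zeta function `ψ(r,γ,κ) = Σ_{k ∈ ℤ, γ+k>0} e((γ+k)κ) (γ+k)^{-r}`
(a convergent series when `Re r > 1`). -/
def psiL (r : ℂ) (γ κ : ℝ) : ℂ :=
  ∑' k : {k : ℤ // 0 < γ + (k : ℝ)},
    ee ((((γ + (k.1 : ℝ)) * κ : ℝ)) : ℂ) * (((γ + (k.1 : ℝ)) : ℝ) : ℂ) ^ (-r)

/-- The `q`-series `𝒮_r(γ,δ;κ,λ;q)`, where `q = e^{-2πt}` with `Re t > 0`, and the power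
`q^{(γ+k)(δ+l)}` is interpreted as `exp (-2πt(γ+k)(δ+l))`. -/
def Scal (r : ℂ) (γ δ' κ lam : ℝ) (t : ℂ) : ℂ :=
  ∑' (k : {k : ℤ // 0 < γ + (k : ℝ)}) (l : {l : ℤ // 0 < δ' + (l : ℝ)}),
    ee ((((γ + (k.1 : ℝ)) * κ + (δ' + (l.1 : ℝ)) * lam : ℝ)) : ℂ) *
      (((δ' + (l.1 : ℝ)) : ℝ) : ℂ) ^ (-r) *
      Complex.exp (-2 * (Real.pi : ℂ) * t * ((γ + (k.1 : ℝ) : ℝ) : ℂ) * ((δ' + (l.1 : ℝ) : ℝ) : ℂ))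

/-- The generalized Eisenstein series `F_{ℤ²}(s;α,β;μ,ν;z)` (mean of the two branch
conventions), defined by an absolutely convergent series for `Re s > 2`. -/
def Fz2 (s : ℂ) (α β μ ν : ℝ) (z : ℂ) : ℂ :=
  (∑' p : {p : ℤ × ℤ // β + (p.2 : ℝ) ≠ 0},
      ee ((((α + (p.1.1 : ℝ)) * μ + (β + (p.1.2 : ℝ)) * ν : ℝ)) : ℂ) *
        ((((α + (p.1.1 : ℝ)) : ℝ) : ℂ) + (((β + (p.1.2 : ℝ)) : ℝ) : ℂ) * z) ^ (-s)) +
  dInt β *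
    ((∑' m : {m : ℤ // 0 < α + (m : ℝ)},
        ee ((((α + (m.1 : ℝ)) * μ : ℝ)) : ℂ) * (((α + (m.1 : ℝ)) : ℝ) : ℂ) ^ (-s)) +
      Complex.cos ((Real.pi : ℂ) * s) *
        ∑' m : {m : ℤ // α + (m : ℝ) < 0},
          ee ((((α + (m.1 : ℝ)) * μ : ℝ)) : ℂ) * ((|α + (m.1 : ℝ)| : ℝ) : ℂ) ^ (-s))

/-- `𝒜(s,α,μ) = cos(πs) ψ(s,-α,-μ) + ψ(s,α,μ)`. -/
def Acal (s : ℂ) (α μ : ℝ) : ℂ :=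
  Complex.cos ((Real.pi : ℂ) * s) * psiL s (-α) (-μ) + psiL s α μ

/-- `ψ(k,γ,κ)` at an integer `k`: the convergent series for `k ≥ 2`, the value
`-𝒞_{1-k}(⟨γ⟩,κ)/(1-k) - δ_{k0} δ(γ)` of the analytic continuation for `k ≤ 0`,
and the (irrelevant) value `0` for `k = 1`; here `C` is the family of Taylor
coefficients `𝒞`. -/
def psiIntC (C : ℕ → ℂ → ℝ → ℂ) (k : ℤ) (γ κ : ℝ) : ℂ :=
  if 2 ≤ k then
    ∑' n : {n : ℤ // 0 < γ + (n : ℝ)},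
      ee ((((γ + (n.1 : ℝ)) * κ : ℝ)) : ℂ) * (((γ + (n.1 : ℝ)) : ℝ) : ℂ) ^ (-k)
  else if k ≤ 0 then
    -C (1 - k).toNat ((Int.fract γ : ℝ) : ℂ) κ / ((1 : ℂ) - (k : ℂ)) -
      (if k = 0 then dInt γ else 0)
  else 0

/-- The Bernoulli polynomial `B_j(x)` evaluated in `ℂ`. -/
def BpolyC (j : ℕ) (x : ℂ) : ℂ := Polynomial.aeval x (Polynomial.bernoulli j)

/-- Weierstrass `℘`-function with periods `(1, z)`. -/
def wpFn (z w : ℂ) : ℂ :=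
  w ^ (-2 : ℤ) + ∑' p : {p : ℤ × ℤ // p ≠ (0, 0)},
    ((w - (p.1.1 : ℂ) - (p.1.2 : ℂ) * z) ^ (-2 : ℤ) -
      ((p.1.1 : ℂ) + (p.1.2 : ℂ) * z) ^ (-2 : ℤ))

/-- Weierstrass zeta function with periods `(1, z)`. -/
def wzetaFn (z w : ℂ) : ℂ :=
  1 / w + ∑' p : {p : ℤ × ℤ // p ≠ (0, 0)},
    (1 / (w - (p.1.1 : ℂ) - (p.1.2 : ℂ) * z) + 1 / ((p.1.1 : ℂ) + (p.1.2 : ℂ) * z) +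
      w / ((p.1.1 : ℂ) + (p.1.2 : ℂ) * z) ^ 2)

/-- Weierstrass sigma function with periods `(1, z)`. -/
def wsigmaFn (z w : ℂ) : ℂ :=
  w * ∏' p : {p : ℤ × ℤ // p ≠ (0, 0)},
    ((1 - w / ((p.1.1 : ℂ) + (p.1.2 : ℂ) * z)) *
      Complex.exp (w / ((p.1.1 : ℂ) + (p.1.2 : ℂ) * z) +
        w ^ 2 / (2 * ((p.1.1 : ℂ) + (p.1.2 : ℂ) * z) ^ 2)))

/-- The `q`-Pochhammer symbol `(Z;q)_∞`. -/
def qPoch (Z q : ℂ) : ℂ := ∏' l : ℕ, (1 - Z * q ^ l)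

/-- `⟨x⟩' = 1 - ⟨-x⟩`. -/
def fracP (x : ℝ) : ℝ := 1 - Int.fract (-x)

/-- The Eisenstein series `E₂`. -/
def E2cl (z : ℂ) : ℂ := 1 - 24 * ∑' l : ℕ+, (l : ℂ) * ee z ^ (l : ℕ) / (1 - ee z ^ (l : ℕ))

/-- `a_{2k}`: `ζ(1-2k)` for `k ≠ 0` and `2ζ'(0) = -log 2π` for `k = 0`. -/
def acoef (k : ℤ) : ℂ :=
  if k = 0 then -(Real.log (2 * Real.pi) : ℂ) else riemannZeta ((1 - 2 * k : ℤ) : ℂ)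

/-- The classical Eisenstein series `E_{2k}`. -/
def Ecl (k : ℤ) (z : ℂ) : ℂ :=
  1 + (2 / acoef k) * ∑' l : ℕ+, (l : ℂ) ^ (2 * k - 1) * ee z ^ (l : ℕ) / (1 - ee z ^ (l : ℕ))

/-- The bilateral Lerch zeta function `ψ_ℤ^ε(r,γ,κ) = e^{-επir} ψ(r,-γ,-κ) + ψ(r,γ,κ)`. -/
def psiZpm (ε : ℤ) (r : ℂ) (γ κ : ℝ) : ℂ :=
  Complex.exp (-(ε : ℂ) * (Real.pi : ℂ) * Complex.I * r) * psiL r (-γ) (-κ) + psiL r γ κ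

open Filter

lemma ee_add (a b : ℂ) : ee (a + b) = ee a * ee b := by
  simp [ee, mul_add, Complex.exp_add]

lemma ee_neg (a : ℂ) : ee (-a) = (ee a)⁻¹ := by
  simp [ee, mul_neg, Complex.exp_neg]

lemma ee_ne_zero (a : ℂ) : ee a ≠ 0 := Complex.exp_ne_zero _

lemma ee_zero : ee 0 = 1 := by simp [ee]

lemma coeffs_zero (a : ℕ → ℂ)
    (h : ∀ᶠ z in nhdsWithin (0:ℂ) {(0:ℂ)}ᶜ, HasSum (fun n => a n * z ^ n) 0) :
    ∀ n, a n = 0 := by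
  set p : FormalMultilinearSeries ℂ ℂ ℂ := FormalMultilinearSeries.ofScalars ℂ a with hp
  have hcoeff : ∀ n, p.coeff n = a n := by
    intro n
    simp [hp, FormalMultilinearSeries.coeff, FormalMultilinearSeries.ofScalars,
      List.prod_ofFn]
  set F : ℂ → ℂ := fun z => if z = 0 then a 0 else 0 with hF
  have hFP : HasFPowerSeriesAt F p 0 := by
    rw [hasFPowerSeriesAt_iff]
    have h' : ∀ᶠ z in nhds (0:ℂ), z ≠ 0 → HasSum (fun n => a n * z ^ n) 0 := by
      simpa [eventually_nhdsWithin_iff] using h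
    filter_upwards [h'] with z hz
    rcases eq_or_ne z 0 with rfl | hz0
    · have : HasSum (fun n => a n * (0:ℂ) ^ n) (a 0) := by
        have := hasSum_single (f := fun n => a n * (0:ℂ) ^ n) 0
          (fun b hb => by simp [zero_pow hb])
        simpa using this
      simpa [hF, hcoeff, smul_eq_mul, mul_comm] using this
    · have := hz hz0
      simp only [hF, if_neg hz0, zero_add]
      convert this using 2 with n
      · rfl
      · simp only [hcoeff, smul_eq_mul, mul_comm]
  have hfreq : ∃ᶠ z in nhdsWithin (0:ℂ) {(0:ℂ)}ᶜ, F z = 0 := by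
    apply Eventually.frequently
    filter_upwards [self_mem_nhdsWithin] with z hz
    have hz' : z ≠ 0 := hz
    simp [hF, hz']
  have hev : ∀ᶠ z in nhds (0:ℂ), F z = 0 :=
    (hFP.analyticAt.frequently_zero_iff_eventually_zero).mp hfreq
  have hp0 : p = 0 := (hFP.locally_zero_iff).mp hev
  intro n
  have := hcoeff n
  rw [hp0] at this
  simpa [FormalMultilinearSeries.coeff] using this.symm

lemma ev_ne (c : ℂ) : ∀ᶠ Z in nhdsWithin (0:ℂ) {(0:ℂ)}ᶜ, c * Complex.exp Z - 1 ≠ 0 := by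
  rcases eq_or_ne c 1 with rfl | hc
  · rw [eventually_nhdsWithin_iff]
    filter_upwards [Metric.ball_mem_nhds (0:ℂ) one_pos] with z hz hz0
    intro hcon
    have h1 : Complex.exp z = 1 := by
      have := sub_eq_zero.mp hcon; simpa using this
    rcases Complex.exp_eq_one_iff.mp h1 with ⟨n, hn⟩
    have hn0 : n ≠ 0 := by
      rintro rfl
      apply Set.mem_compl_iff _ _ |>.mp hz0
      simpa using hn
    have : (1:ℝ) ≤ ‖z‖ := by
      rw [hn, norm_mul]
      have h2 : ‖(2 * Real.pi * Complex.I : ℂ)‖ = 2 * Real.pi := by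
        simp [norm_mul, Real.pi_pos.le, abs_of_nonneg]
      rw [h2, Complex.norm_intCast]
      have h3 : (1:ℝ) ≤ |(n:ℝ)| := by
        rw [← Int.cast_abs]
        exact_mod_cast Int.one_le_abs hn0
      nlinarith [Real.pi_gt_three]
    have : ‖z‖ < 1 := by simpa [Metric.mem_ball] using hz
    linarith
  · have hcont : ContinuousAt (fun z : ℂ => c * Complex.exp z - 1) 0 := by fun_prop
    have h0 : c * Complex.exp 0 - 1 ≠ 0 := by simpa [sub_eq_zero] using hc
    exact (hcont.eventually_ne h0).filter_mono nhdsWithin_le_nhds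

lemma neg_tendsto : Filter.Tendsto (fun z : ℂ => -z)
    (nhdsWithin (0:ℂ) {(0:ℂ)}ᶜ) (nhdsWithin (0:ℂ) {(0:ℂ)}ᶜ) := by
  apply Filter.Tendsto.inf
  · simpa using (continuous_neg (G := ℂ)).tendsto 0
  · exact Filter.tendsto_principal_principal.mpr (fun x hx => by simpa using hx)

lemma hB_ne (κ : ℝ) (Z : ℂ) (hA : ee (-(κ:ℂ)) * Complex.exp Z - 1 ≠ 0) :
    ee ((κ:ℝ):ℂ) * Complex.exp (-Z) - 1 ≠ 0 := by
  have hc : ee ((κ:ℝ):ℂ) ≠ 0 := ee_ne_zero _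
  have hu : Complex.exp Z ≠ 0 := Complex.exp_ne_zero _
  rw [ee_neg] at hA
  have key : ee ((κ:ℝ):ℂ) * Complex.exp (-Z) - 1 =
      -(ee ((κ:ℝ):ℂ)) * (Complex.exp Z)⁻¹ * ((ee ((κ:ℝ):ℂ))⁻¹ * Complex.exp Z - 1) := by
    rw [Complex.exp_neg]
    field_simp
    ring
  rw [key]
  exact mul_ne_zero (mul_ne_zero (neg_ne_zero.mpr hc) (inv_ne_zero hu)) hA

/-- Key identity, non-integer case: X' = 1 - X, δ = 0. -/
lemma key1 (X : ℂ) (κ : ℝ) (Z : ℂ) (hA : ee (((-κ:ℝ)):ℂ) * Complex.exp Z - 1 ≠ 0) :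
    Z * ee ((1 - X) * (((-κ:ℝ)):ℂ)) * Complex.exp ((1 - X) * Z) /
      (ee (((-κ:ℝ)):ℂ) * Complex.exp Z - 1) =
    (-Z) * ee (X * ((κ:ℝ):ℂ)) * Complex.exp (X * (-Z)) /
      (ee ((κ:ℝ):ℂ) * Complex.exp (-Z) - 1) := by
  simp only [Complex.ofReal_neg] at hA ⊢
  have hc : ee ((κ:ℝ):ℂ) ≠ 0 := ee_ne_zero _
  have hu : Complex.exp Z ≠ 0 := Complex.exp_ne_zero _
  have hB : ee ((κ:ℝ):ℂ) * Complex.exp (-Z) - 1 ≠ 0 := hB_ne κ Z hA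
  have e1 : ee ((1 - X) * (-((κ:ℝ):ℂ))) = ee (X * ((κ:ℝ):ℂ)) * (ee ((κ:ℝ):ℂ))⁻¹ := by
    rw [← ee_neg, ← ee_add]
    ring_nf
  have e2 : Complex.exp ((1 - X) * Z) = Complex.exp Z * Complex.exp (X * (-Z)) := by
    rw [← Complex.exp_add]; ring_nf
  rw [e1, e2, ee_neg, Complex.exp_neg] at *
  field_simp
  rw [show ee ((κ:ℝ):ℂ) - Complex.exp Z = -(Complex.exp Z - ee ((κ:ℝ):ℂ)) by ring, div_neg]
  ring

/-- Key identity, integer case: X = X' = 0, δ = 1. -/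
lemma key2 (κ : ℝ) (Z : ℂ) (hA : ee (((-κ:ℝ)):ℂ) * Complex.exp Z - 1 ≠ 0) :
    Z * ee ((0:ℂ) * (((-κ:ℝ)):ℂ)) * Complex.exp ((0:ℂ) * Z) /
      (ee (((-κ:ℝ)):ℂ) * Complex.exp Z - 1) =
    (-Z) * ee ((0:ℂ) * ((κ:ℝ):ℂ)) * Complex.exp ((0:ℂ) * (-Z)) /
      (ee ((κ:ℝ):ℂ) * Complex.exp (-Z) - 1) - Z := by
  simp only [Complex.ofReal_neg] at hA ⊢
  have hc : ee ((κ:ℝ):ℂ) ≠ 0 := ee_ne_zero _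
  have hu : Complex.exp Z ≠ 0 := Complex.exp_ne_zero _
  have hB : ee ((κ:ℝ):ℂ) * Complex.exp (-Z) - 1 ≠ 0 := by
    apply hB_ne κ Z
    simpa [Complex.ofReal_neg] using hA
  rw [ee_neg, Complex.exp_neg] at *
  simp only [zero_mul, ee_zero, Complex.exp_zero, mul_one]
  have h5 : Complex.exp Z - ee ((κ:ℝ):ℂ) ≠ 0 := by
    intro h
    apply hA
    rw [sub_eq_zero] at h
    rw [h]
    field_simp
    simp
  field_simp
  rw [show ee ((κ:ℝ):ℂ) - Complex.exp Z = -(Complex.exp Z - ee ((κ:ℝ):ℂ)) by ring, div_neg]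
  field_simp
  ring

/-- Lemma 3 of the paper: the reciprocity `𝒞_k(⟨-γ⟩,-κ) = (-1)^k 𝒞_k(⟨γ⟩,κ) - δ_{k1} δ(γ)`
for the generalized Bernoulli functions, characterized by their Taylor expansion. -/
theorem statement17 (C : ℕ → ℂ → ℝ → ℂ)
    (hC : ∀ (X : ℂ) (κ : ℝ), ∀ᶠ Z in nhdsWithin (0 : ℂ) {(0 : ℂ)}ᶜ,
      HasSum (fun j : ℕ => C j X κ * Z ^ j / (Nat.factorial j : ℂ))
        (Z * ee (X * (κ : ℂ)) * Complex.exp (X * Z) / (ee ((κ : ℝ) : ℂ) * Complex.exp Z - 1))) (γ κ : ℝ) (k : ℕ) :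
    C k ((Int.fract (-γ) : ℝ) : ℂ) (-κ) =
      (-1 : ℂ) ^ k * C k ((Int.fract γ : ℝ) : ℂ) κ -
        (if k = 1 then 1 else 0) * dInt γ := by
  classical
  set X : ℂ := ((Int.fract γ : ℝ) : ℂ) with hX
  set X' : ℂ := ((Int.fract (-γ) : ℝ) : ℂ) with hX'
  set d : ℂ := dInt γ with hd
  set a : ℕ → ℂ := fun j =>
    (C j X' (-κ) - ((-1 : ℂ) ^ j * C j X κ - (if j = 1 then 1 else 0) * d)) /
      (Nat.factorial j : ℂ) with ha
  have h1 := hC X' (-κ)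
  have h2 := neg_tendsto.eventually (hC X κ)
  have hNe := ev_ne (ee (((-κ : ℝ)) : ℂ))
  have key : ∀ᶠ Z in nhdsWithin (0 : ℂ) {(0 : ℂ)}ᶜ,
      HasSum (fun n => a n * Z ^ n) 0 := by
    filter_upwards [h1, h2, hNe] with Z hs1 hs2 hne
    have hδ : HasSum (fun j : ℕ => ((if j = 1 then (1:ℂ) else 0) * d) * Z ^ j /
        (Nat.factorial j : ℂ)) (d * Z) := by
      have := hasSum_single (f := fun j : ℕ => ((if j = 1 then (1:ℂ) else 0) * d) * Z ^ j /
        (Nat.factorial j : ℂ)) 1 (fun b hb => by simp [hb])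
      simpa using this
    have hs2' : HasSum (fun j : ℕ => ((-1 : ℂ) ^ j * C j X κ) * Z ^ j / (Nat.factorial j : ℂ))
        ((-Z) * ee (X * (κ : ℂ)) * Complex.exp (X * (-Z)) /
          (ee ((κ : ℝ) : ℂ) * Complex.exp (-Z) - 1)) := by
      convert hs2 using 2 with j
      rw [neg_pow]
      ring
    have hsum := hs1.sub (hs2'.sub hδ)
    have hval : Z * ee (X' * ((-κ : ℝ) : ℂ)) * Complex.exp (X' * Z) /
          (ee (((-κ : ℝ)) : ℂ) * Complex.exp Z - 1) -
        ((-Z) * ee (X * (κ : ℂ)) * Complex.exp (X * (-Z)) /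
          (ee ((κ : ℝ) : ℂ) * Complex.exp (-Z) - 1) - d * Z) = 0 := by
      rw [sub_eq_zero]
      by_cases hint : ∃ n : ℤ, (n : ℝ) = γ
      · obtain ⟨n, hn⟩ := hint
        have hfγ : Int.fract γ = 0 := by rw [← hn, Int.fract_intCast]
        have hfγ' : Int.fract (-γ) = 0 := by
          rw [← hn, show -((n:ℝ)) = (((-n : ℤ) : ℝ)) by push_cast; ring, Int.fract_intCast]
        have hd1 : d = 1 := by rw [hd, dInt, if_pos ⟨n, hn⟩]
        have hX0 : X = 0 := by rw [hX, hfγ]; simp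
        have hX'0 : X' = 0 := by rw [hX', hfγ']; simp
        rw [hX0, hX'0, hd1, one_mul]
        exact key2 κ Z hne
      · have hd0 : d = 0 := by rw [hd, dInt, if_neg hint]
        have hfz : Int.fract γ ≠ 0 := by
          intro h0
          exact hint ⟨⌊γ⌋, by
            have := Int.floor_add_fract γ
            rw [h0, add_zero] at this
            exact this⟩
        have hX'1 : X' = 1 - X := by
          rw [hX', hX, Int.fract_neg hfz]
          push_cast
          ring
        rw [hX'1, hd0, zero_mul, sub_zero]
        exact key1 X κ Z hne
    have := hval ▸ hsum
    have hfun : (fun j : ℕ => C j X' (-κ) * Z ^ j / (Nat.factorial j : ℂ) -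
        (((-1 : ℂ) ^ j * C j X κ) * Z ^ j / (Nat.factorial j : ℂ) -
          ((if j = 1 then (1:ℂ) else 0) * d) * Z ^ j / (Nat.factorial j : ℂ))) =
        fun n => a n * Z ^ n := by
      funext j
      rw [ha]
      ring
    rw [hfun] at this
    exact this
  have hall := coeffs_zero a key
  have hk := hall k
  rw [ha] at hk
  have hfac : ((Nat.factorial k : ℂ)) ≠ 0 :=
    Nat.cast_ne_zero.mpr (Nat.factorial_ne_zero k)
  rcases div_eq_zero_iff.mp hk with h | h
  · exact sub_eq_zero.mp h
  · exact absurd h hfac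


end
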